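/- If a prime p with p ≡ 3 (mod 4) divides r, then the directed cycle C_r admits a k-fold oriented p-coloring where p = 4k − 1; consequently χ_o^*(C_r) ≤ 4 − 4/(p+1). -/

import Mathlib

/-- An oriented graph: a directed graph with no loops and no directed 2-cycles. -/
structure OGraph (V : Type*) where
  adj : V → V → Prop
  irrefl : ∀ v, ¬ adj v v
  asymm : ∀ u v, adj u v → ¬ adj v u

/-- A homomorphism of oriented graphs. -/
def OGraph.Hom {V W : Type*} (G : OGraph V) (H : OGraph W) (f : V → W) : Prop :=
  ∀ u v, G.adj u v → H.adj (f u) (f v)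

/-- `f` is a `b`-fold oriented `k`-coloring of `G`. -/
def IsFoldColoring {V : Type*} (G : OGraph V) (b k : ℕ) (f : V → Finset (Fin k)) : Prop :=
  (∀ v, (f v).card = b) ∧
  (∀ u v, G.adj u v → Disjoint (f u) (f v)) ∧
  (∀ x y z w, G.adj x y → G.adj z w → ¬ Disjoint (f x) (f w) → Disjoint (f y) (f z))

/-- The `b`-fold oriented chromatic number. -/
noncomputable def foldChrom {V : Type*} (G : OGraph V) (b : ℕ) : ℕ :=
  sInf {k | ∃ f : V → Finset (Fin k), IsFoldColoring G b k f}

/-- The fractional oriented chromatic number: the infimum of `k/b` over all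
`b`-fold oriented `k`-colorings. -/
noncomputable def fracChrom {V : Type*} (G : OGraph V) : ℝ :=
  sInf {x : ℝ | ∃ (b k : ℕ) (f : V → Finset (Fin k)),
    0 < b ∧ IsFoldColoring G b k f ∧ x = (k : ℝ) / b}

/-- The directed cycle of length `r`. -/
def dirCycle (r : ℕ) (hr : 3 ≤ r) : OGraph (ZMod r) where
  adj u v := v = u + 1
  irrefl := by
    intro v hv
    haveI : NeZero r := ⟨by omega⟩
    have h1 : ((1 : ℕ) : ZMod r) = 0 := by
      have := left_eq_add.mp hv
      simpa using this
    rw [ZMod.natCast_eq_zero_iff] at h1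
    have := Nat.le_of_dvd one_pos h1
    omega
  asymm := by
    intro u v h1 h2
    haveI : NeZero r := ⟨by omega⟩
    have : u = u + 1 + 1 := by rw [← h1]; exact h2
    have h2' : ((2 : ℕ) : ZMod r) = 0 := by
      have := left_eq_add.mp (by rw [add_assoc] at this; exact this)
      push_cast
      simpa [one_add_one_eq_two] using this
    rw [ZMod.natCast_eq_zero_iff] at h2'
    have := Nat.le_of_dvd two_pos h2'
    omega

theorem stmt15 (r p k : ℕ) (hr : 3 ≤ r) (hp : Nat.Prime p) (hp4 : p % 4 = 3)
    (hpr : p ∣ r) (hk : p = 4 * k - 1) :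
    (∃ f : ZMod r → Finset (Fin p), IsFoldColoring (dirCycle r hr) k p f) ∧
      fracChrom (dirCycle r hr) ≤ 4 - 4 / ((p : ℝ) + 1) := by
  haveI hp0 : NeZero p := ⟨hp.pos.ne'⟩
  have hk1 : 1 ≤ k := by
    rcases Nat.eq_zero_or_pos k with h | h
    · exfalso; subst h; simp at hk; omega
    · exact h
  have hpk : p + 1 = 4 * k := by
    have := hp.two_le; omega
  -- cast injectivity
  have cast_inj : ∀ m n : ℕ, m < p → n < p → ((m : ZMod p) = (n : ZMod p)) → m = n := by
    intro m n hm hn h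
    have := congrArg ZMod.val h
    rwa [ZMod.val_natCast_of_lt hm, ZMod.val_natCast_of_lt hn] at this
  set g := ZMod.castHom hpr (ZMod p) with hg
  set f : ZMod r → Finset (Fin p) :=
    fun x => Finset.image (fun j : Fin k =>
      (⟨(g x * (k : ZMod p) + (j.val : ZMod p)).val, ZMod.val_lt _⟩ : Fin p)) Finset.univ
    with hf
  -- membership characterization
  have hmem : ∀ (x : ZMod r) (c : Fin p), c ∈ f x ↔
      ∃ j : ℕ, j < k ∧ g x * (k : ZMod p) + (j : ZMod p) = ((c : ℕ) : ZMod p) := by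
    intro x c
    simp only [hf, Finset.mem_image, Finset.mem_univ, true_and]
    constructor
    · rintro ⟨j, hj⟩
      refine ⟨j.val, j.isLt, ?_⟩
      have : (g x * (k : ZMod p) + (j.val : ZMod p)).val = (c : ℕ) := by
        have := congrArg Fin.val hj; simpa using this
      rw [← this]
      exact (ZMod.natCast_rightInverse (g x * (k : ZMod p) + (j.val : ZMod p))).symm
    · rintro ⟨j, hj, hje⟩
      refine ⟨⟨j, hj⟩, ?_⟩
      apply Fin.ext
      simp only
      rw [hje, ZMod.val_natCast_of_lt c.isLt]
  have hcoloring : IsFoldColoring (dirCycle r hr) k p f := by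
    refine ⟨?_, ?_, ?_⟩
    · -- cardinality
      intro v
      rw [hf]
      rw [Finset.card_image_of_injective _ ?_, Finset.card_univ, Fintype.card_fin]
      intro j1 j2 hj
      have h1 := congrArg Fin.val hj
      simp only at h1
      have h2 : g v * (k : ZMod p) + (j1.val : ZMod p) = g v * (k : ZMod p) + (j2.val : ZMod p) := by
        apply ZMod.val_injective; exact h1
      have h3 : (j1.val : ZMod p) = (j2.val : ZMod p) := by
        exact add_left_cancel h2
      exact Fin.ext (cast_inj _ _ (lt_of_lt_of_le j1.isLt (by omega)) (lt_of_lt_of_le j2.isLt (by omega)) h3)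
    · -- adjacent disjoint
      intro u v huv
      rw [Finset.disjoint_left]
      intro c hcu hcv
      obtain ⟨j1, hj1, he1⟩ := (hmem u c).1 hcu
      obtain ⟨j2, hj2, he2⟩ := (hmem v c).1 hcv
      have hv : g v = g u + 1 := by
        have : v = u + 1 := huv
        rw [this, map_add, map_one]
      rw [hv] at he2
      have heq : ((j1 : ℕ) : ZMod p) = ((k + j2 : ℕ) : ZMod p) := by
        push_cast
        linear_combination he1 - he2
      have := cast_inj _ _ (by omega) (by omega) heq
      omega
    · -- oriented condition
      intro x y z w hxy hzw hnd
      rw [Finset.not_disjoint_iff] at hnd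
      obtain ⟨c, hcx, hcw⟩ := hnd
      obtain ⟨j1, hj1, he1⟩ := (hmem x c).1 hcx
      obtain ⟨j2, hj2, he2⟩ := (hmem w c).1 hcw
      rw [Finset.disjoint_left]
      intro c' hcy hcz
      obtain ⟨j3, hj3, he3⟩ := (hmem y c').1 hcy
      obtain ⟨j4, hj4, he4⟩ := (hmem z c').1 hcz
      have hy : g y = g x + 1 := by
        have : y = x + 1 := hxy
        rw [this, map_add, map_one]
      have hw : g w = g z + 1 := by
        have : w = z + 1 := hzw
        rw [this, map_add, map_one]
      rw [hw] at he2
      rw [hy] at he3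
      have heq : ((2 * k + j2 + j3 : ℕ) : ZMod p) = ((j1 + j4 : ℕ) : ZMod p) := by
        push_cast
        linear_combination he3 - he4 - he1 + he2
      have := cast_inj _ _ (by omega) (by omega) heq
      omega
  refine ⟨⟨f, hcoloring⟩, ?_⟩
  have hk0 : (0:ℝ) < (k:ℝ) := by exact_mod_cast hk1
  have hmemS : (p : ℝ) / (k : ℝ) ∈ {x : ℝ | ∃ (b k' : ℕ) (f' : ZMod r → Finset (Fin k')),
      0 < b ∧ IsFoldColoring (dirCycle r hr) b k' f' ∧ x = (k' : ℝ) / b} :=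
    ⟨k, p, f, hk1, hcoloring, rfl⟩
  have hbdd : BddBelow {x : ℝ | ∃ (b k' : ℕ) (f' : ZMod r → Finset (Fin k')),
      0 < b ∧ IsFoldColoring (dirCycle r hr) b k' f' ∧ x = (k' : ℝ) / b} := by
    refine ⟨0, ?_⟩
    rintro x ⟨b, k', f', hb, _, rfl⟩
    positivity
  have h1 : fracChrom (dirCycle r hr) ≤ (p : ℝ) / (k : ℝ) := csInf_le hbdd hmemS
  have h2 : (p : ℝ) / (k : ℝ) = 4 - 4 / ((p : ℝ) + 1) := by
    have hp1 : (p : ℝ) + 1 = 4 * (k : ℝ) := by exact_mod_cast hpk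
    have hpr' : (p : ℝ) = 4 * (k : ℝ) - 1 := by linarith
    rw [hp1, hpr']
    field_simp
  linarith
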